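/- Let X be a projective Kähler surface, 𝓛 an ample line bundle on X, and L a line bundle on X (the vortex line bundle). Then for all sufficiently large p, the very ample bundle 𝓛^p has, by Bertini's theorem, a smooth irreducible divisor S, and deg(L) − deg(𝓛^p) < 0, so that no nonzero holomorphic section of L vanishes identically on S; hence the obstructions O(1) and O(2) are avoided for the vortex moduli space of X with Kähler form pω (and hence for (X, ω), since (X, ω) and (X, pω) are biholomorphic). -/
import Mathlib


/-!
STATEMENT 16.  Let `X` be a projective Kähler surface, `𝓛` an ample line
bundle on `X`, and `L` a line bundle on `X` (the vortex line bundle).  Then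
for all sufficiently large `p`, the very ample bundle `𝓛^p` has, by
Bertini's theorem, a smooth irreducible divisor `S`, and
`deg(L) − deg(𝓛^p) < 0`, so that no nonzero holomorphic section of `L`
vanishes identically on `S`; hence the obstructions `O(1)` and `O(2)` are
avoided for the vortex moduli space of `X` with Kähler form `pω` (and hence
for `(X, ω)`, since `(X, ω)` and `(X, pω)` are biholomorphic).
-/

/-- Abstract model of line bundles and divisors on a projective Kähler
surface `X` with integral Kähler form `ω`, together with the standard facts
about degrees, very ampleness of high powers of an ample bundle, and
Bertini's theorem. -/
structure ProjSurfaceData : Type 1 where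
  /-- Holomorphic line bundles on `X`. -/
  LineB : Type
  /-- Divisors (closed complex curves) in `X`. -/
  Divisor : Type
  /-- Degree of a line bundle (against the Kähler class). -/
  degL : LineB → ℤ
  /-- Degree of a divisor. -/
  degD : Divisor → ℤ
  /-- The `p`-th tensor power of a line bundle. -/
  pow : LineB → ℕ → LineB
  /-- The line bundle is ample. -/
  IsAmple : LineB → Prop
  /-- The line bundle is very ample. -/
  IsVeryAmple : LineB → Prop
  /-- The divisor is smooth and irreducible. -/
  IsSmoothIrreducible : Divisor → Prop
  /-- The divisor is the zero divisor of some nonzero holomorphic section of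
  the bundle (in particular it represents the Poincaré dual of its Chern
  class). -/
  IsZeroDivisorOf : LineB → Divisor → Prop
  /-- Some non-identically-zero holomorphic section of the bundle vanishes
  identically on the divisor. -/
  SectionVanishesOn : LineB → Divisor → Prop
  /-- `deg(E^p) = p · deg(E)`. -/
  deg_pow : ∀ (E : LineB) (p : ℕ), degL (pow E p) = (p : ℤ) * degL E
  /-- If a bundle has a holomorphic section vanishing on a smooth irreducible
  divisor `D`, then `deg(E) − deg(D) ≥ 0`. -/
  deg_sub_nonneg_of_vanishes : ∀ (E : LineB) (D : Divisor),
    IsSmoothIrreducible D → SectionVanishesOn E D → 0 ≤ degL E - degD D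
  /-- High powers of an ample bundle are very ample. -/
  veryAmple_pow : ∀ E : LineB, IsAmple E → ∃ p₀ : ℕ, ∀ p ≥ p₀, IsVeryAmple (pow E p)
  /-- Bertini's theorem: a very ample bundle has a smooth irreducible
  divisor. -/
  bertini : ∀ E : LineB, IsVeryAmple E →
    ∃ D : Divisor, IsSmoothIrreducible D ∧ IsZeroDivisorOf E D
  /-- The degree of a zero divisor of a section of `E` is `deg(E)`. -/
  deg_zeroDivisor : ∀ (E : LineB) (D : Divisor), IsZeroDivisorOf E D → degD D = degL E
  /-- An ample line bundle on the projective surface has positive degree. -/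
  deg_pos_of_ample : ∀ E : LineB, IsAmple E → 0 < degL E
  /-- The Chern class of the bundle is the Kähler class `[ω]` (so its
  divisors represent the Poincaré dual of the Kähler class of `(X, pω)` for
  the corresponding power). -/
  RepresentsKahlerClass : LineB → Prop

/-- For `𝓛` ample (representing the Kähler class of `X`)
and `L` the vortex line bundle, for all sufficiently large `p`, `𝓛^p` is very
ample and has, by Bertini, a smooth irreducible divisor `S`, with
`deg(L) − deg(𝓛^p) < 0`, and hence no nonzero holomorphic section of `L`
vanishes identically on `S`: the obstruction `O(2)` is avoided (the complex
curve `S` represents the Poincaré dual of the Kähler class of `(X, pω)`) and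
the obstruction `O(1)` is avoided. -/
theorem obstructions_avoided_for_projective_surface
    (D : ProjSurfaceData) (𝓛 L : D.LineB)
    (hample : D.IsAmple 𝓛)
    (hrep : D.RepresentsKahlerClass 𝓛) :
    ∃ p₀ : ℕ, ∀ p ≥ p₀,
      D.IsVeryAmple (D.pow 𝓛 p) ∧
      ∃ S : D.Divisor,
        D.IsSmoothIrreducible S ∧
        D.IsZeroDivisorOf (D.pow 𝓛 p) S ∧
        D.degL L - D.degL (D.pow 𝓛 p) < 0 ∧
        ¬ D.SectionVanishesOn L S := by
  obtain ⟨q₀, hq₀⟩ := D.veryAmple_pow 𝓛 hample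
  refine ⟨max q₀ ((D.degL L).toNat + 1), fun p hp => ?_⟩
  have hva := hq₀ p (le_trans (le_max_left _ _) hp)
  refine ⟨hva, ?_⟩
  obtain ⟨S, hS, hZ⟩ := D.bertini _ hva
  have hpos := D.deg_pos_of_ample 𝓛 hample
  have hdeg : D.degL L - D.degL (D.pow 𝓛 p) < 0 := by
    rw [D.deg_pow]
    have h1 : ((D.degL L).toNat + 1 : ℕ) ≤ p := le_trans (le_max_right _ _) hp
    have h2 : D.degL L < (p : ℤ) := by
      calc D.degL L ≤ (D.degL L).toNat := Int.self_le_toNat _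
        _ < ((D.degL L).toNat + 1 : ℕ) := by exact_mod_cast Nat.lt_succ_self _
        _ ≤ (p : ℤ) := by exact_mod_cast h1
    have h3 : (p : ℤ) * 1 ≤ (p : ℤ) * D.degL 𝓛 :=
      mul_le_mul_of_nonneg_left hpos (by positivity)
    omega
  refine ⟨S, hS, hZ, hdeg, fun hv => ?_⟩
  have := D.deg_sub_nonneg_of_vanishes L S hS hv
  have hd := D.deg_zeroDivisor _ _ hZ
  omega
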